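/- For every real A > 1 there exists a constant C_A > 1 such that: for every d ≥ 1 and every real polynomial P of degree d, if |P(n)| ≤ A^n for every integer n with 0 ≤ n ≤ C_A·d, then |P(n)| ≤ A^n for every natural number n. -/

import Mathlib

open Polynomial Finset

/-- Product of distances from node `i` to the other nodes `0,…,d`. -/
lemma aux_prod_dist (d i : ℕ) (hid : i ≤ d) :
    ∏ j ∈ (Finset.range (d + 1)).erase i, |(i : ℝ) - (j : ℝ)| =
      (Nat.factorial i : ℝ) * (Nat.factorial (d - i) : ℝ) := by
  have hsplit : (Finset.range (d + 1)).erase i =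
      Finset.range i ∪ Finset.Ico (i + 1) (d + 1) := by
    ext j
    simp only [Finset.mem_erase, Finset.mem_range, Finset.mem_union, Finset.mem_Ico]
    omega
  have hdisj : Disjoint (Finset.range i) (Finset.Ico (i + 1) (d + 1)) := by
    rw [Finset.disjoint_left]
    intro j hj hj2
    simp only [Finset.mem_range] at hj
    simp only [Finset.mem_Ico] at hj2
    omega
  rw [hsplit, Finset.prod_union hdisj]
  have h1 : ∏ j ∈ Finset.range i, |(i : ℝ) - (j : ℝ)| = (Nat.factorial i : ℝ) := by
    have hc : ∀ j ∈ Finset.range i, |(i : ℝ) - (j : ℝ)| = ((i - j : ℕ) : ℝ) := by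
      intro j hj
      rw [Finset.mem_range] at hj
      rw [Nat.cast_sub hj.le, abs_of_nonneg (by
        have : (j : ℝ) ≤ (i : ℝ) := Nat.cast_le.mpr hj.le
        linarith)]
    rw [Finset.prod_congr rfl hc, ← Nat.cast_prod]
    congr 1
    calc ∏ j ∈ Finset.range i, (i - j)
        = ∏ j ∈ Finset.range i, (i - (i - 1 - j)) := (Finset.prod_range_reflect (fun j => i - j) i).symm
      _ = ∏ j ∈ Finset.range i, (j + 1) := by
          refine Finset.prod_congr rfl fun j hj => ?_
          rw [Finset.mem_range] at hj
          omega
      _ = Nat.factorial i := Finset.prod_range_add_one_eq_factorial i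
  have h2 : ∏ j ∈ Finset.Ico (i + 1) (d + 1), |(i : ℝ) - (j : ℝ)| =
      (Nat.factorial (d - i) : ℝ) := by
    have hc : ∀ j ∈ Finset.Ico (i + 1) (d + 1), |(i : ℝ) - (j : ℝ)| = ((j - i : ℕ) : ℝ) := by
      intro j hj
      rw [Finset.mem_Ico] at hj
      rw [abs_sub_comm, Nat.cast_sub (by omega), abs_of_nonneg (by
        have : (i : ℝ) ≤ (j : ℝ) := Nat.cast_le.mpr (by omega)
        linarith)]
    rw [Finset.prod_congr rfl hc, ← Nat.cast_prod]
    congr 1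
    rw [Finset.prod_Ico_eq_prod_range]
    have : ∀ k ∈ Finset.range (d + 1 - (i + 1)), (i + 1 + k - i) = k + 1 := by
      intro k _; omega
    rw [Finset.prod_congr rfl this, Finset.prod_range_add_one_eq_factorial]
    congr 1
    omega
  rw [h1, h2]

/-- For every `A > 1` there is `C_A > 1` such that any real polynomial of degree `d ≥ 1`
satisfying `|P(n)| ≤ A^n` for all integers `0 ≤ n ≤ C_A·d` satisfies it for all `n ∈ ℕ`. -/
theorem stmt_14 (A : ℝ) (hA : 1 < A) :
    ∃ C : ℝ, 1 < C ∧
      ∀ d : ℕ, 1 ≤ d → ∀ P : Polynomial ℝ, P.natDegree = d →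
        (∀ n : ℕ, (n : ℝ) ≤ C * d → |P.eval (n : ℝ)| ≤ A ^ n) →
        ∀ n : ℕ, |P.eval (n : ℝ)| ≤ A ^ n := by
  have hA0 : (0 : ℝ) < A := lt_trans one_pos hA
  set L : ℝ := Real.log A with hLdef
  have hL0 : 0 < L := Real.log_pos hA
  set C : ℝ := max 2 (48 * A / L ^ 2) with hCdef
  have hC2 : (2 : ℝ) ≤ C := le_max_left _ _
  have hC1 : (1 : ℝ) < C := lt_of_lt_of_le one_lt_two hC2
  have hCkey : ∀ t : ℝ, C ≤ t → 12 * A * t ≤ A ^ t := by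
    intro t ht
    have ht0 : (0 : ℝ) < t := lt_of_lt_of_le (by linarith) ht
    have h1 : 48 * A / L ^ 2 ≤ t := le_trans (le_max_right _ _) ht
    have h2 : 48 * A ≤ t * L ^ 2 := by
      rw [div_le_iff₀ (by positivity)] at h1
      linarith
    have h3 : A ^ t = Real.exp (t * L) := by
      rw [Real.rpow_def_of_pos hA0, mul_comm]
    have h4 : Real.exp (t * L) = Real.exp (t * L / 2) ^ 2 := by
      rw [← Real.exp_nat_mul]
      norm_num
      ring
    have h5 : t * L / 2 + 1 ≤ Real.exp (t * L / 2) := Real.add_one_le_exp _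
    have h6 : (t * L / 2) ^ 2 ≤ Real.exp (t * L / 2) ^ 2 := by
      apply pow_le_pow_left₀ (by positivity)
      linarith
    rw [h3, h4]
    nlinarith [sq_nonneg L, sq_nonneg t, mul_pos ht0 hL0]
  refine ⟨C, hC1, ?_⟩
  intro d hd P hPdeg hsmall n
  by_cases hn : (n : ℝ) ≤ C * d
  · exact hsmall n hn
  push_neg at hn
  -- now C * d < n
  have hd0 : (0 : ℝ) < d := by exact_mod_cast hd
  have hdn : d ≤ n := by
    have : (d : ℝ) < n := lt_of_le_of_lt (by nlinarith) hn
    exact_mod_cast this.le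
  have hP0 : P ≠ 0 := by
    intro h
    rw [h, Polynomial.natDegree_zero] at hPdeg
    omega
  -- Lagrange interpolation at nodes 0, 1, ..., d
  have hvs : Set.InjOn (Nat.cast : ℕ → ℝ) (Finset.range (d + 1)) :=
    fun a _ b _ h => Nat.cast_injective h
  have hdeg : P.degree < (Finset.range (d + 1)).card := by
    rw [Finset.card_range, Polynomial.degree_eq_natDegree hP0, hPdeg]
    exact_mod_cast Nat.lt_succ_self d
  have hinterp := Lagrange.eq_interpolate hvs hdeg
  -- evaluate at n
  have heval : P.eval (n : ℝ) = ∑ i ∈ Finset.range (d + 1),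
      P.eval (i : ℝ) * ∏ j ∈ (Finset.range (d + 1)).erase i,
        (((i : ℝ) - (j : ℝ))⁻¹ * ((n : ℝ) - (j : ℝ))) := by
    conv_lhs => rw [hinterp]
    rw [Lagrange.interpolate_apply, Polynomial.eval_finset_sum]
    refine Finset.sum_congr rfl fun i _ => ?_
    rw [Polynomial.eval_mul, Polynomial.eval_C, Lagrange.basis, Polynomial.eval_prod]
    congr 1
    refine Finset.prod_congr rfl fun j _ => ?_
    simp [Lagrange.basisDivisor]
  -- per-term bound
  have hterm : ∀ i ∈ Finset.range (d + 1),
      |P.eval (i : ℝ) * ∏ j ∈ (Finset.range (d + 1)).erase i,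
        (((i : ℝ) - (j : ℝ))⁻¹ * ((n : ℝ) - (j : ℝ)))| ≤
        A ^ d * ((2 : ℝ) ^ d / (Nat.factorial d : ℝ) * (n : ℝ) ^ d) := by
    intro i hi
    rw [Finset.mem_range] at hi
    have hid : i ≤ d := Nat.lt_succ_iff.mp hi
    rw [abs_mul, Finset.abs_prod]
    simp_rw [abs_mul, abs_inv]
    rw [Finset.prod_mul_distrib, Finset.prod_inv_distrib]
    have hPi : |P.eval (i : ℝ)| ≤ A ^ d := by
      have h1 : |P.eval (i : ℝ)| ≤ A ^ i := by
        apply hsmall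
        have : (i : ℝ) ≤ d := Nat.cast_le.mpr hid
        nlinarith
      exact le_trans h1 (pow_le_pow_right₀ hA.le hid)
    have hden : (∏ j ∈ (Finset.range (d + 1)).erase i, |(i : ℝ) - (j : ℝ)|)⁻¹ ≤
        (2 : ℝ) ^ d / (Nat.factorial d : ℝ) := by
      rw [aux_prod_dist d i hid]
      have hpos : (0 : ℝ) < (Nat.factorial i : ℝ) * (Nat.factorial (d - i) : ℝ) := by
        positivity
      rw [inv_eq_one_div, div_le_div_iff₀ hpos (by positivity)]
      have hnat : Nat.factorial d ≤ 2 ^ d * (Nat.factorial i * Nat.factorial (d - i)) := by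
        have hch : d.choose i ≤ 2 ^ d := by
          calc d.choose i ≤ ∑ k ∈ Finset.range (d + 1), d.choose k :=
                Finset.single_le_sum (fun k _ => Nat.zero_le _) (Finset.mem_range.mpr hi)
            _ = 2 ^ d := Nat.sum_range_choose d
        calc Nat.factorial d = d.choose i * Nat.factorial i * Nat.factorial (d - i) :=
              (Nat.choose_mul_factorial_mul_factorial hid).symm
          _ ≤ 2 ^ d * Nat.factorial i * Nat.factorial (d - i) := by
              exact Nat.mul_le_mul_right _ (Nat.mul_le_mul_right _ hch)
          _ = 2 ^ d * (Nat.factorial i * Nat.factorial (d - i)) := by ring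
      have : (Nat.factorial d : ℝ) ≤ (2 : ℝ) ^ d * ((Nat.factorial i : ℝ) * (Nat.factorial (d - i) : ℝ)) := by
        exact_mod_cast hnat
      linarith
    have hnum : ∏ j ∈ (Finset.range (d + 1)).erase i, |(n : ℝ) - (j : ℝ)| ≤ (n : ℝ) ^ d := by
      have hcard : ((Finset.range (d + 1)).erase i).card = d := by
        rw [Finset.card_erase_of_mem (Finset.mem_range.mpr hi), Finset.card_range]
        omega
      calc ∏ j ∈ (Finset.range (d + 1)).erase i, |(n : ℝ) - (j : ℝ)|
          ≤ ∏ _j ∈ (Finset.range (d + 1)).erase i, (n : ℝ) := by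
            apply Finset.prod_le_prod (fun j _ => abs_nonneg _)
            intro j hj
            have hjd : j ≤ d := by
              have := Finset.mem_range.mp (Finset.mem_of_mem_erase hj)
              omega
            have hjn : (j : ℝ) ≤ (n : ℝ) := Nat.cast_le.mpr (le_trans hjd hdn)
            rw [abs_of_nonneg (by linarith)]
            have : (0 : ℝ) ≤ (j : ℝ) := Nat.cast_nonneg j
            linarith
        _ = (n : ℝ) ^ d := by rw [Finset.prod_const, hcard]
    have hnn1 : (0 : ℝ) ≤ (∏ j ∈ (Finset.range (d + 1)).erase i, |(i : ℝ) - (j : ℝ)|)⁻¹ :=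
      inv_nonneg.mpr (Finset.prod_nonneg fun j _ => abs_nonneg _)
    have hnn2 : (0 : ℝ) ≤ ∏ j ∈ (Finset.range (d + 1)).erase i, |(n : ℝ) - (j : ℝ)| :=
      Finset.prod_nonneg fun j _ => abs_nonneg _
    exact mul_le_mul hPi (mul_le_mul hden hnum hnn2 (by positivity))
      (mul_nonneg hnn1 hnn2) (by positivity)
  -- sum the bounds
  have hsum : |P.eval (n : ℝ)| ≤
      (d + 1 : ℝ) * (A ^ d * ((2 : ℝ) ^ d / (Nat.factorial d : ℝ) * (n : ℝ) ^ d)) := by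
    rw [heval]
    refine le_trans (Finset.abs_sum_le_sum_abs _ _) (le_trans (Finset.sum_le_sum hterm) ?_)
    rw [Finset.sum_const, Finset.card_range, nsmul_eq_mul]
    apply le_of_eq
    push_cast
    ring
  -- final analytic estimate
  set t : ℝ := (n : ℝ) / d with htdef
  have htC : C ≤ t := by
    rw [htdef, le_div_iff₀ hd0]
    exact hn.le
  have ht0 : (0 : ℝ) < t := lt_of_lt_of_le (by linarith) htC
  have hkey := hCkey t htC
  have hfact3 : (d : ℝ) ^ d ≤ 3 ^ d * (Nat.factorial d : ℝ) := by
    have h1 : (d : ℝ) ^ d / (Nat.factorial d : ℝ) ≤ Real.exp (d : ℝ) :=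
      Real.pow_div_factorial_le_exp _ (Nat.cast_nonneg d) d
    have h2 : Real.exp (d : ℝ) = Real.exp 1 ^ d := by
      rw [← Real.exp_nat_mul, mul_one]
    have h3 : Real.exp 1 ^ d ≤ 3 ^ d := by
      apply pow_le_pow_left₀ (Real.exp_nonneg 1)
      linarith [Real.exp_one_lt_d9]
    have hfpos : (0 : ℝ) < (Nat.factorial d : ℝ) := by positivity
    rw [div_le_iff₀ hfpos] at h1
    calc (d : ℝ) ^ d ≤ Real.exp (d : ℝ) * (Nat.factorial d : ℝ) := h1
      _ = Real.exp 1 ^ d * (Nat.factorial d : ℝ) := by rw [h2]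
      _ ≤ 3 ^ d * (Nat.factorial d : ℝ) := by
          apply mul_le_mul_of_nonneg_right h3 hfpos.le
  have hd2 : (d + 1 : ℝ) ≤ 2 ^ d := by
    have h := Nat.lt_two_pow_self (n := d)
    have : d + 1 ≤ 2 ^ d := h
    exact_mod_cast this
  have hinv : ((Nat.factorial d : ℝ))⁻¹ ≤ 3 ^ d / (d : ℝ) ^ d := by
    rw [inv_eq_one_div, div_le_div_iff₀ (by positivity) (by positivity)]
    linarith [hfact3]
  have hchain : (d + 1 : ℝ) * (A ^ d * ((2 : ℝ) ^ d / (Nat.factorial d : ℝ) * (n : ℝ) ^ d)) ≤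
      A ^ n := by
    calc (d + 1 : ℝ) * (A ^ d * ((2 : ℝ) ^ d / (Nat.factorial d : ℝ) * (n : ℝ) ^ d))
        = (d + 1 : ℝ) * A ^ d * (2 : ℝ) ^ d * ((Nat.factorial d : ℝ))⁻¹ * (n : ℝ) ^ d := by
          ring
      _ ≤ (2 : ℝ) ^ d * A ^ d * (2 : ℝ) ^ d * (3 ^ d / (d : ℝ) ^ d) * (n : ℝ) ^ d := by
          gcongr
      _ = (12 * A * t) ^ d := by
          have h12 : (12 : ℝ) ^ d = 2 ^ d * 2 ^ d * 3 ^ d := by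
            rw [← mul_pow, ← mul_pow]; norm_num
          rw [htdef, mul_pow, mul_pow, div_pow, h12]
          ring
      _ ≤ (A ^ t) ^ d := pow_le_pow_left₀ (by positivity) hkey d
      _ = A ^ (n : ℝ) := by
          rw [← Real.rpow_natCast (A ^ t) d, ← Real.rpow_mul hA0.le]
          congr 1
          rw [htdef]
          field_simp
      _ = A ^ n := Real.rpow_natCast A n
  exact le_trans hsum hchain
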